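/- Every ordered rooted tree with n nodes admits a planar, order-preserving, strictly-upward, straight-line grid drawing of width at most n and height at most n in which the root is at the top-left corner, some root-to-leaf path is drawn on a single vertical line, and no subtree drawing uses that line's column except the path itself. -/
import Mathlib


/-- An ordered rooted tree: a root together with an ordered list of subtrees. -/
inductive OTree : Type
  | node : List OTree → OTree

mutual
  /-- Number of nodes of an ordered rooted tree. -/
  def OTree.size : OTree → ℕ
    | .node ts => 1 + OTree.sizeList ts
  def OTree.sizeList : List OTree → ℕ
    | [] => 0
    | t :: ts => OTree.size t + OTree.sizeList ts
end

mutual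
  /-- `subAt t a` is the subtree of `t` at address `a` (a list of child indices,
  read from the root), or `none` if there is no such node. -/
  def OTree.subAt : OTree → List ℕ → Option OTree
    | t, [] => some t
    | .node ts, i :: a => OTree.subAtList ts i a
  def OTree.subAtList : List OTree → ℕ → List ℕ → Option OTree
    | [], _, _ => none
    | t :: _, 0, a => OTree.subAt t a
    | _ :: ts, i + 1, a => OTree.subAtList ts i a
end

/-- `a` is the address of a node of `t`. -/
def OTree.isAddr (t : OTree) (a : List ℕ) : Prop := (t.subAt a).isSome

/-- `a` is the address of a leaf of `t`. -/
def OTree.isLeafAddr (t : OTree) (a : List ℕ) : Prop := t.subAt a = some (.node [])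

/-- Cast a grid point to the real plane. -/
def toPlane (q : ℤ × ℤ) : ℝ × ℝ := ((q.1 : ℝ), (q.2 : ℝ))

/-- The closed straight-line segment between two grid points, in the real plane. -/
def gridSegment (q r : ℤ × ℤ) : Set (ℝ × ℝ) := segment ℝ (toPlane q) (toPlane r)

/-- Cross product of two integer vectors. -/
def crossProd (u v : ℤ × ℤ) : ℤ := u.1 * v.2 - u.2 * v.1


namespace GLR

mutual
  def pre : OTree → List ℕ → ℕ
    | _, [] => 0
    | .node ts, i :: a => 1 + preList ts i a
  def preList : List OTree → ℕ → List ℕ → ℕ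
    | [], _, _ => 0
    | t :: _, 0, a => pre t a
    | t :: ts, i + 1, a => t.size + preList ts i a
end

theorem size_pos : ∀ t : OTree, 1 ≤ t.size
  | .node ts => by simp [OTree.size]

mutual
theorem subAt_append : ∀ (t : OTree) (a b : List ℕ),
    t.subAt (a ++ b) = (t.subAt a).bind (fun s => s.subAt b)
  | _, [], _ => by simp [OTree.subAt]
  | .node ts, i :: a, b => by
      simp only [List.cons_append, OTree.subAt]
      exact subAtList_append ts i a b
theorem subAtList_append : ∀ (ts : List OTree) (i : ℕ) (a b : List ℕ),
    OTree.subAtList ts i (a ++ b) = (OTree.subAtList ts i a).bind (fun s => s.subAt b)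
  | [], _, _, _ => by simp [OTree.subAtList]
  | t :: _, 0, a, b => by
      simp only [OTree.subAtList]; exact subAt_append t a b
  | _ :: ts, i + 1, a, b => by
      simp only [OTree.subAtList]; exact subAtList_append ts i a b
end

mutual
theorem pre_append : ∀ (t : OTree) (a : List ℕ) {s : OTree},
    t.subAt a = some s → ∀ b : List ℕ, pre t (a ++ b) = pre t a + pre s b
  | t, [], s, h, b => by
      simp only [OTree.subAt, Option.some.injEq] at h
      subst h; simp [pre]
  | .node ts, i :: a, s, h, b => by
      simp only [OTree.subAt] at h
      simp only [List.cons_append, pre]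
      rw [preList_append ts i a h b]; omega
theorem preList_append : ∀ (ts : List OTree) (i : ℕ) (a : List ℕ) {s : OTree},
    OTree.subAtList ts i a = some s → ∀ b : List ℕ,
      preList ts i (a ++ b) = preList ts i a + pre s b
  | [], _, _, s, h, _ => by simp [OTree.subAtList] at h
  | t :: _, 0, a, s, h, b => by
      simp only [OTree.subAtList] at h
      simp only [preList]; exact pre_append t a h b
  | _ :: ts, i + 1, a, s, h, b => by
      simp only [OTree.subAtList] at h
      simp only [preList]
      rw [preList_append ts i a h b]; omega
end

mutual
theorem pre_add_size_le : ∀ (t : OTree) (a : List ℕ) {s : OTree},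
    t.subAt a = some s → pre t a + s.size ≤ t.size
  | t, [], s, h => by
      simp only [OTree.subAt, Option.some.injEq] at h; subst h; simp [pre]
  | .node ts, i :: a, s, h => by
      simp only [OTree.subAt] at h
      have := preList_add_size_le ts i a h
      simp only [pre, OTree.size]; omega
theorem preList_add_size_le : ∀ (ts : List OTree) (i : ℕ) (a : List ℕ) {s : OTree},
    OTree.subAtList ts i a = some s → preList ts i a + s.size ≤ OTree.sizeList ts
  | [], _, _, s, h => by simp [OTree.subAtList] at h
  | t :: ts, 0, a, s, h => by
      simp only [OTree.subAtList] at h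
      have := pre_add_size_le t a h
      simp only [preList, OTree.sizeList]; omega
  | t :: ts, i + 1, a, s, h => by
      simp only [OTree.subAtList] at h
      have := preList_add_size_le ts i a h
      simp only [preList, OTree.sizeList]; omega
end

mutual
theorem length_le_pre : ∀ (t : OTree) (a : List ℕ) {s : OTree},
    t.subAt a = some s → a.length ≤ pre t a
  | _, [], _, _ => by simp [pre]
  | .node ts, i :: a, s, h => by
      simp only [OTree.subAt] at h
      have := length_le_preList ts i a h
      simp only [pre, List.length_cons]; omega
theorem length_le_preList : ∀ (ts : List OTree) (i : ℕ) (a : List ℕ) {s : OTree},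
    OTree.subAtList ts i a = some s → a.length ≤ preList ts i a
  | [], _, _, s, h => by simp [OTree.subAtList] at h
  | t :: _, 0, a, s, h => by
      simp only [OTree.subAtList] at h
      simpa [preList] using length_le_pre t a h
  | _ :: ts, i + 1, a, s, h => by
      simp only [OTree.subAtList] at h
      have := length_le_preList ts i a h
      simp only [preList]; omega
end

mutual
theorem sep : ∀ (t : OTree) (a b : List ℕ) {sa sb : OTree},
    t.subAt a = some sa → t.subAt b = some sb → ¬ a <+: b → ¬ b <+: a →
    pre t a + sa.size ≤ pre t b ∨ pre t b + sb.size ≤ pre t a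
  | _, [], b, _, _, _, _, h1, _ => absurd (List.nil_prefix) h1
  | _, _ :: _, [], _, _, _, _, _, h2 => absurd (List.nil_prefix) h2
  | .node ts, i :: a, j :: b, sa, sb, ha, hb, h1, h2 => by
      simp only [OTree.subAt] at ha hb
      have h1' : ¬ (i = j ∧ a <+: b) := fun ⟨hij, hab⟩ => h1 (by subst hij; exact List.cons_prefix_cons.mpr ⟨rfl, hab⟩)
      have h2' : ¬ (j = i ∧ b <+: a) := fun ⟨hij, hab⟩ => h2 (by subst hij; exact List.cons_prefix_cons.mpr ⟨rfl, hab⟩)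
      have := sepList ts i a j b ha hb h1' h2'
      simp only [pre]; omega
theorem sepList : ∀ (ts : List OTree) (i : ℕ) (a : List ℕ) (j : ℕ) (b : List ℕ) {sa sb : OTree},
    OTree.subAtList ts i a = some sa → OTree.subAtList ts j b = some sb →
    ¬ (i = j ∧ a <+: b) → ¬ (j = i ∧ b <+: a) →
    preList ts i a + sa.size ≤ preList ts j b ∨ preList ts j b + sb.size ≤ preList ts i a
  | [], _, _, _, _, sa, sb, ha, _, _, _ => by simp [OTree.subAtList] at ha
  | t :: ts, 0, a, 0, b, sa, sb, ha, hb, h1, h2 => by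
      simp only [OTree.subAtList] at ha hb
      have := sep t a b ha hb (fun h => h1 ⟨rfl, h⟩) (fun h => h2 ⟨rfl, h⟩)
      simp only [preList]; omega
  | t :: ts, 0, a, j + 1, b, sa, sb, ha, hb, _, _ => by
      simp only [OTree.subAtList] at ha hb
      have h1 := pre_add_size_le t a ha
      simp only [preList]; omega
  | t :: ts, i + 1, a, 0, b, sa, sb, ha, hb, _, _ => by
      simp only [OTree.subAtList] at ha hb
      have h1 := pre_add_size_le t b hb
      simp only [preList]; omega
  | t :: ts, i + 1, a, j + 1, b, sa, sb, ha, hb, h1, h2 => by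
      simp only [OTree.subAtList] at ha hb
      have h1' : ¬ (i = j ∧ a <+: b) := fun ⟨hij, hab⟩ => h1 ⟨by omega, hab⟩
      have h2' : ¬ (j = i ∧ b <+: a) := fun ⟨hij, hab⟩ => h2 ⟨by omega, hab⟩
      have := sepList ts i a j b ha hb h1' h2'
      simp only [preList]; omega
end

theorem preList_mono : ∀ (ts : List OTree) (i : ℕ) (a : List ℕ) (j : ℕ) (b : List ℕ) {sa : OTree},
    i < j → OTree.subAtList ts i a = some sa → preList ts i a + sa.size ≤ preList ts j b
  | [], _, _, _, _, sa, _, ha => by simp [OTree.subAtList] at ha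
  | t :: ts, 0, a, j + 1, b, sa, _, ha => by
      simp only [OTree.subAtList] at ha
      have := pre_add_size_le t a ha
      simp only [preList]; omega
  | t :: ts, i + 1, a, j + 1, b, sa, hij, ha => by
      simp only [OTree.subAtList] at ha
      have := preList_mono ts i a j b (by omega) ha
      simp only [preList]; omega


/-- From validity of `a ++ b` get validity of `a` and of `b` in the subtree. -/
theorem subAt_of_append {t : OTree} {a b : List ℕ} {s : OTree}
    (h : t.subAt (a ++ b) = some s) :
    ∃ sa : OTree, t.subAt a = some sa ∧ sa.subAt b = some s := by
  rw [subAt_append] at h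
  cases hsa : t.subAt a with
  | none => rw [hsa] at h; simp at h
  | some sa => rw [hsa] at h; exact ⟨sa, rfl, h⟩

theorem pre_strict_prefix {t : OTree} {a b : List ℕ} {sb : OTree}
    (hb : t.subAt b = some sb) (hpre : a <+: b) (hne : a ≠ b) :
    ∃ sa : OTree, t.subAt a = some sa ∧ pre t a < pre t b ∧
      pre t b + sb.size ≤ pre t a + sa.size := by
  obtain ⟨c, rfl⟩ := hpre
  obtain ⟨sa, hsa, hc⟩ := subAt_of_append hb
  have hc0 : c ≠ [] := by rintro rfl; exact hne (by simp)
  have h1 : 1 ≤ c.length := by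
    cases c with | nil => exact absurd rfl hc0 | cons x xs => simp
  have h2 := length_le_pre sa c hc
  have h3 := pre_add_size_le sa c hc
  have h4 := pre_append t a hsa c
  exact ⟨sa, hsa, by omega, by omega⟩

theorem pre_inj {t : OTree} {a b : List ℕ} {sa sb : OTree}
    (ha : t.subAt a = some sa) (hb : t.subAt b = some sb)
    (h : pre t a = pre t b) : a = b := by
  by_cases hab : a = b
  · exact hab
  by_cases h1 : a <+: b
  · obtain ⟨_, _, h2, _⟩ := pre_strict_prefix hb h1 hab
    omega
  by_cases h2 : b <+: a
  · obtain ⟨_, _, h3, _⟩ := pre_strict_prefix ha h2 (Ne.symm hab)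
    omega
  · have := sep t a b ha hb h1 h2
    have := size_pos sa
    have := size_pos sb
    omega

/-- decompose a valid child address. -/
theorem child_decomp {t : OTree} {a : List ℕ} {i : ℕ} {s : OTree}
    (h : t.subAt (a ++ [i]) = some s) :
    ∃ ts : List OTree, t.subAt a = some (.node ts) ∧
      OTree.subAtList ts i [] = some s ∧
      pre t (a ++ [i]) = pre t a + 1 + preList ts i [] := by
  obtain ⟨sa, hsa, hc⟩ := subAt_of_append h
  obtain ⟨ts⟩ := sa
  refine ⟨ts, hsa, ?_, ?_⟩
  · simpa [OTree.subAt] using hc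
  · rw [pre_append t a hsa [i]]
    simp [pre]
    omega

theorem pre_child_lt {t : OTree} {a : List ℕ} {i : ℕ} {s : OTree}
    (h : t.subAt (a ++ [i]) = some s) : pre t a < pre t (a ++ [i]) := by
  obtain ⟨ts, _, _, h3⟩ := child_decomp h
  omega

theorem pre_sibling_lt {t : OTree} {a : List ℕ} {i j : ℕ} {si sj : OTree}
    (hij : i < j) (hi : t.subAt (a ++ [i]) = some si) (hj : t.subAt (a ++ [j]) = some sj) :
    pre t (a ++ [i]) < pre t (a ++ [j]) := by
  obtain ⟨ts, ha, hci, h3⟩ := child_decomp hi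
  obtain ⟨ts', ha', hcj, h3'⟩ := child_decomp hj
  rw [ha] at ha'
  have hts : ts = ts' := by cases ha'; rfl
  subst hts
  have := preList_mono ts i [] j [] hij hci
  have := size_pos si
  omega

/-- The leftmost root-to-leaf path. -/
def lpath : OTree → List ℕ
  | .node [] => []
  | .node (t :: _) => 0 :: lpath t

theorem lpath_leaf : ∀ t : OTree, t.subAt (lpath t) = some (.node [])
  | .node [] => rfl
  | .node (t :: ts) => by
      show OTree.subAt (.node (t :: ts)) (0 :: lpath t) = some (.node [])
      simp only [OTree.subAt, OTree.subAtList]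
      exact lpath_leaf t

theorem lpath_prefix_pre : ∀ (t : OTree) (a : List ℕ), a <+: lpath t → pre t a = a.length
  | .node [], a, h => by
      have : a = [] := List.prefix_nil.mp (by simpa [lpath] using h)
      subst this; simp [pre]
  | .node (t :: ts), a, h => by
      rw [show lpath (.node (t :: ts)) = 0 :: lpath t from rfl] at h
      cases a with
      | nil => simp [pre]
      | cons i a' =>
        obtain ⟨h0, h1⟩ := List.cons_prefix_cons.mp h
        subst h0
        have := lpath_prefix_pre t a' h1
        simp only [pre, preList, List.length_cons]
        omega

theorem lpath_of_pre_eq : ∀ (t : OTree) (a : List ℕ) {s : OTree},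
    t.subAt a = some s → pre t a = a.length → a <+: lpath t
  | _, [], _, _, _ => List.nil_prefix
  | .node ts, i :: a, s, h, hp => by
      simp only [OTree.subAt] at h
      simp only [pre, List.length_cons] at hp
      have hlen := length_le_preList ts i a h
      match ts, i, h with
      | t :: ts', 0, h =>
          simp only [OTree.subAtList] at h
          simp only [preList] at hp hlen
          have := lpath_of_pre_eq t a h (by omega)
          rw [show lpath (.node (t :: ts')) = 0 :: lpath t from rfl]
          exact List.cons_prefix_cons.mpr ⟨rfl, this⟩
      | t :: ts', i + 1, h =>
          simp only [OTree.subAtList] at h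
          simp only [preList] at hp hlen
          have := length_le_preList ts' i a h
          have := size_pos t
          omega

theorem mem_gridSegment {q r : ℤ × ℤ} {x : ℝ × ℝ} (h : x ∈ gridSegment q r) :
    ∃ s : ℝ, 0 ≤ s ∧ s ≤ 1 ∧ x.1 = (1 - s) * ((q.1 : ℤ) : ℝ) + s * ((r.1 : ℤ) : ℝ) ∧
      x.2 = (1 - s) * ((q.2 : ℤ) : ℝ) + s * ((r.2 : ℤ) : ℝ) := by
  rw [gridSegment, segment_eq_image] at h
  obtain ⟨θ, ⟨h0, h1⟩, rfl⟩ := h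
  refine ⟨θ, h0, h1, ?_, ?_⟩ <;> simp [toPlane, Prod.smul_fst, Prod.smul_snd, smul_eq_mul]

theorem toPlane_mem_gridSegment_left (q r : ℤ × ℤ) : toPlane q ∈ gridSegment q r :=
  left_mem_segment _ _ _

theorem no_cross_aux {pa pc pb pd : ℕ} {s : ℝ}
    (hpa : pa < pb) (hpc : pc < pb) (hpd : pb < pd)
    (hs0 : 0 ≤ s) (hs1 : s ≤ 1)
    (e : (1 - s) * (-(pa : ℝ)) + s * (-(pc : ℝ)) =
      (1 - s) * (-(pb : ℝ)) + s * (-(pd : ℝ))) : False := by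
  have h1 : (pa : ℝ) + 1 ≤ (pb : ℝ) := by exact_mod_cast hpa
  have h2 : (pc : ℝ) + 1 ≤ (pb : ℝ) := by exact_mod_cast hpc
  have h3 : (pb : ℝ) + 1 ≤ (pd : ℝ) := by exact_mod_cast hpd
  nlinarith [mul_nonneg (by linarith : (0:ℝ) ≤ 1 - s) (by linarith : (0:ℝ) ≤ (pb:ℝ) - 1 - pa),
    mul_nonneg hs0 (by linarith : (0:ℝ) ≤ (pb:ℝ) - 1 - pc),
    mul_nonneg hs0 (by linarith : (0:ℝ) ≤ (pd:ℝ) - pb)]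

theorem prefix_eq_of_length {a b : List ℕ} (h : a <+: b) (hl : b.length ≤ a.length) :
    a = b := by
  obtain ⟨c, rfl⟩ := h
  have : c = [] := by
    cases c with
    | nil => rfl
    | cons x xs => simp at hl
  simp [this]

theorem eq_toPlane {x : ℝ × ℝ} {q : ℤ × ℤ} (h1 : x.1 = ((q.1 : ℤ) : ℝ))
    (h2 : x.2 = ((q.2 : ℤ) : ℝ)) : x = toPlane q := Prod.ext h1 h2

theorem edge_below {t : OTree} {a b : List ℕ} {i : ℕ} {si sb : OTree}
    (hai : t.subAt (a ++ [i]) = some si) (hb : t.subAt b = some sb)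
    (hlen : a.length = b.length) (hne : a ≠ b)
    (hlt : pre t a < pre t b) : pre t (a ++ [i]) < pre t b := by
  obtain ⟨sa, hsa, _⟩ := subAt_of_append hai
  have hnp1 : ¬ a <+: b := fun h => by
    have := prefix_eq_of_length h (by omega); exact hne this
  have hnp2 : ¬ b <+: a := fun h => by
    have := prefix_eq_of_length h (by omega); exact hne this.symm
  rcases sep t a b hsa hb hnp1 hnp2 with h | h
  · obtain ⟨sa', hsa', h1, h2⟩ := pre_strict_prefix hai (List.prefix_append a [i])
      (by simp)
    rw [hsa] at hsa'
    have hss : sa' = sa := by cases hsa'; rfl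
    subst hss
    have := size_pos si
    omega
  · have := size_pos sb; omega

end GLR


open GLR

theorem exists_quadratic_GLR_drawing (t : OTree) (n : ℕ) (hsize : t.size = n) :
    ∃ pos : List ℕ → ℤ × ℤ,
      -- distinct nodes occupy distinct grid points
      (∀ a b : List ℕ, t.isAddr a → t.isAddr b → pos a = pos b → a = b) ∧
      -- strictly upward: every child is strictly below its parent
      (∀ (a : List ℕ) (i : ℕ), t.isAddr (a ++ [i]) →
        (pos (a ++ [i])).2 < (pos a).2) ∧
      -- order-preserving: children of a node appear in left-to-right angular order
      (∀ (a : List ℕ) (i j : ℕ), i < j → t.isAddr (a ++ [i]) → t.isAddr (a ++ [j]) →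
        0 < crossProd (pos (a ++ [i]) - pos a) (pos (a ++ [j]) - pos a)) ∧
      -- planar, straight-line: two distinct edges meet only in common endpoints
      (∀ (a : List ℕ) (i : ℕ) (b : List ℕ) (j : ℕ),
        t.isAddr (a ++ [i]) → t.isAddr (b ++ [j]) → (a, i) ≠ (b, j) →
        ∀ x ∈ gridSegment (pos a) (pos (a ++ [i])) ∩ gridSegment (pos b) (pos (b ++ [j])),
          ∃ c : List ℕ, (c = a ∨ c = a ++ [i]) ∧ (c = b ∨ c = b ++ [j]) ∧
            x = toPlane (pos c)) ∧
      -- planar: no node lies on an edge it is not an endpoint of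
      (∀ (a : List ℕ) (i : ℕ) (c : List ℕ), t.isAddr (a ++ [i]) → t.isAddr c →
        c ≠ a → c ≠ a ++ [i] → toPlane (pos c) ∉ gridSegment (pos a) (pos (a ++ [i]))) ∧
      -- width at most n
      (∃ x0 : ℤ, ∀ a : List ℕ, t.isAddr a → x0 ≤ (pos a).1 ∧ (pos a).1 < x0 + n) ∧
      -- height at most n
      (∃ y0 : ℤ, ∀ a : List ℕ, t.isAddr a → y0 ≤ (pos a).2 ∧ (pos a).2 < y0 + n) ∧
      -- the root is at the top-left corner
      (∀ a : List ℕ, t.isAddr a →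
        (pos ([] : List ℕ)).1 ≤ (pos a).1 ∧ (pos a).2 ≤ (pos ([] : List ℕ)).2) ∧
      -- some root-to-leaf path is drawn on a single vertical line, and no other
      -- node uses that column
      (∃ ℓ : List ℕ, t.isLeafAddr ℓ ∧
        (∀ a : List ℕ, a <+: ℓ → (pos a).1 = (pos ([] : List ℕ)).1) ∧
        (∀ a : List ℕ, t.isAddr a → ¬ a <+: ℓ →
          (pos a).1 ≠ (pos ([] : List ℕ)).1)) := by
  have hpre_nil : ∀ s : OTree, pre s [] = 0 := fun s => by simp [pre]
  have haddr : ∀ a : List ℕ, t.isAddr a → ∃ s, t.subAt a = some s := by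
    intro a h
    rw [OTree.isAddr, Option.isSome_iff_exists] at h
    exact h
  refine ⟨fun a => ((pre t a : ℤ) - a.length, -(pre t a : ℤ)), ?_, ?_, ?_, ?_, ?_, ?_, ?_, ?_, ?_⟩
  · -- injectivity
    intro a b ha hb h
    obtain ⟨sa, hsa⟩ := haddr a ha
    obtain ⟨sb, hsb⟩ := haddr b hb
    have h2 := congrArg Prod.snd h
    simp only at h2
    have : pre t a = pre t b := by omega
    exact pre_inj hsa hsb this
  · -- upward
    intro a i h
    obtain ⟨si, hai⟩ := haddr _ h
    have := pre_child_lt hai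
    simp only
    omega
  · -- order-preserving
    intro a i j hij hi hj
    obtain ⟨si, hai⟩ := haddr _ hi
    obtain ⟨sj, haj⟩ := haddr _ hj
    have h1 := pre_child_lt hai
    have h2 := pre_child_lt haj
    have h3 := pre_sibling_lt hij hai haj
    simp only [crossProd, Prod.fst_sub, Prod.snd_sub, List.length_append,
      List.length_cons, List.length_nil]
    set pa := pre t a
    set pc := pre t (a ++ [i])
    set pd := pre t (a ++ [j])
    push_cast
    have hdc : (0 : ℤ) < (pd : ℤ) - pc := by omega
    nlinarith [hdc]
  · -- planarity of edges
    intro a i b j hia hjb hne x hx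
    obtain ⟨hxa, hxb⟩ := hx
    obtain ⟨si, hai⟩ := haddr _ hia
    obtain ⟨sj, hbj⟩ := haddr _ hjb
    obtain ⟨sa, hsa, _⟩ := subAt_of_append hai
    obtain ⟨sb, hsb, _⟩ := subAt_of_append hbj
    obtain ⟨s, hs0, hs1, hx1, hx2⟩ := mem_gridSegment hxa
    obtain ⟨r, hr0, hr1, hy1, hy2⟩ := mem_gridSegment hxb
    push_cast [List.length_append, List.length_cons, List.length_nil] at hx1 hx2 hy1 hy2
    have pac := pre_child_lt hai
    have pbd := pre_child_lt hbj
    have hD : (a.length : ℝ) + s = (b.length : ℝ) + r := by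
      have e1 : -x.2 - x.1 = (a.length : ℝ) + s := by rw [hx1, hx2]; ring
      have e2 : -x.2 - x.1 = (b.length : ℝ) + r := by rw [hy1, hy2]; ring
      linarith
    have hll1 : a.length ≤ b.length + 1 := by
      have : (a.length : ℝ) ≤ (b.length : ℝ) + 1 := by linarith
      exact_mod_cast this
    have hll2 : b.length ≤ a.length + 1 := by
      have : (b.length : ℝ) ≤ (a.length : ℝ) + 1 := by linarith
      exact_mod_cast this
    rcases Nat.lt_trichotomy a.length b.length with hl | hl | hl
    · -- b one deeper: s = 1, r = 0, a ++ [i] = b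
      have hlb : (b.length : ℝ) = (a.length : ℝ) + 1 := by
        have : b.length = a.length + 1 := by omega
        exact_mod_cast this
      have hs : s = 1 := by linarith
      have hr : r = 0 := by linarith
      have hpp : pre t (a ++ [i]) = pre t b := by
        have e1 : x.2 = -(pre t (a ++ [i]) : ℝ) := by rw [hx2, hs]; ring
        have e2 : x.2 = -(pre t b : ℝ) := by rw [hy2, hr]; ring
        have : (pre t (a ++ [i]) : ℝ) = (pre t b : ℝ) := by linarith
        exact_mod_cast this
      have hab : a ++ [i] = b := pre_inj hai hsb hpp
      refine ⟨a ++ [i], Or.inr rfl, Or.inl hab, eq_toPlane ?_ ?_⟩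
      · rw [hx1, hs]; push_cast [List.length_append, List.length_cons, List.length_nil]; ring
      · rw [hx2, hs]; push_cast; ring
    · -- same level
      have hsr : s = r := by
        have : (a.length : ℝ) = (b.length : ℝ) := by exact_mod_cast hl
        linarith
      subst hsr
      by_cases hab : a = b
      · subst hab
        have hij : i ≠ j := by intro h; exact hne (by rw [h])
        have hcd : pre t (a ++ [i]) ≠ pre t (a ++ [j]) := by
          intro h
          have := pre_inj hai hbj h
          simp at this
          exact hij this
        have e : s * ((pre t (a ++ [j]) : ℝ) - (pre t (a ++ [i]) : ℝ)) = 0 := by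
          linear_combination hy2 - hx2
        rcases mul_eq_zero.mp e with h | h
        · subst h
          refine ⟨a, Or.inl rfl, Or.inl rfl, eq_toPlane ?_ ?_⟩
          · rw [hx1]; push_cast; ring
          · rw [hx2]; push_cast; ring
        · exfalso
          apply hcd
          have : (pre t (a ++ [i]) : ℝ) = (pre t (a ++ [j]) : ℝ) := by linarith
          exact_mod_cast this
      · exfalso
        have hpab : pre t a ≠ pre t b := fun h => hab (pre_inj hsa hsb h)
        have e : (1 - s) * (-(pre t a : ℝ)) + s * (-(pre t (a ++ [i]) : ℝ)) =
            (1 - s) * (-(pre t b : ℝ)) + s * (-(pre t (b ++ [j]) : ℝ)) := by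
          linear_combination hy2 - hx2
        rcases Nat.lt_or_ge (pre t a) (pre t b) with hlt | hge
        · exact no_cross_aux hlt (edge_below hai hsb hl hab hlt) pbd hs0 hs1 e
        · have hgt : pre t b < pre t a := by omega
          exact no_cross_aux hgt (edge_below hbj hsa hl.symm (Ne.symm hab) hgt) pac
            hs0 hs1 e.symm
    · -- a one deeper: s = 0, r = 1, b ++ [j] = a
      have hla : (a.length : ℝ) = (b.length : ℝ) + 1 := by
        have : a.length = b.length + 1 := by omega
        exact_mod_cast this
      have hr : r = 1 := by linarith
      have hs : s = 0 := by linarith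
      have hpp : pre t (b ++ [j]) = pre t a := by
        have e1 : x.2 = -(pre t (b ++ [j]) : ℝ) := by rw [hy2, hr]; ring
        have e2 : x.2 = -(pre t a : ℝ) := by rw [hx2, hs]; ring
        have : (pre t (b ++ [j]) : ℝ) = (pre t a : ℝ) := by linarith
        exact_mod_cast this
      have hba : b ++ [j] = a := pre_inj hbj hsa hpp
      refine ⟨a, Or.inl rfl, Or.inr hba.symm, eq_toPlane ?_ ?_⟩
      · rw [hx1, hs]; push_cast; ring
      · rw [hx2, hs]; push_cast; ring
  · -- no node on an edge
    intro a i c hia hc hca hci hmem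
    obtain ⟨si, hai⟩ := haddr _ hia
    obtain ⟨sc, hsc⟩ := haddr _ hc
    obtain ⟨sa, hsa, _⟩ := subAt_of_append hai
    obtain ⟨s, hs0, hs1, hx1, hx2⟩ := mem_gridSegment hmem
    simp only [toPlane] at hx1 hx2
    push_cast [List.length_append, List.length_cons, List.length_nil] at hx1 hx2
    have hD : (c.length : ℝ) = (a.length : ℝ) + s := by
      linear_combination -hx2 - hx1
    have hlc : c.length = a.length ∨ c.length = a.length + 1 := by
      have e1 : (a.length : ℝ) ≤ (c.length : ℝ) := by linarith
      have e2 : (c.length : ℝ) ≤ (a.length : ℝ) + 1 := by linarith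
      have e1' : a.length ≤ c.length := by exact_mod_cast e1
      have e2' : c.length ≤ a.length + 1 := by exact_mod_cast e2
      omega
    rcases hlc with h | h
    · have hs : s = 0 := by
        have : (c.length : ℝ) = (a.length : ℝ) := by exact_mod_cast h
        linarith
      rw [hs] at hx2
      have : (pre t c : ℝ) = (pre t a : ℝ) := by linarith
      have hp : pre t c = pre t a := by exact_mod_cast this
      exact hca (pre_inj hsc hsa hp)
    · have hs : s = 1 := by
        have : (c.length : ℝ) = (a.length : ℝ) + 1 := by exact_mod_cast h
        linarith
      rw [hs] at hx2
      have : (pre t c : ℝ) = (pre t (a ++ [i]) : ℝ) := by linarith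
      have hp : pre t c = pre t (a ++ [i]) := by exact_mod_cast this
      exact hci (pre_inj hsc hai hp)
  · -- width
    refine ⟨0, fun a ha => ?_⟩
    obtain ⟨sa, hsa⟩ := haddr a ha
    have h1 := pre_add_size_le t a hsa
    have h2 := size_pos sa
    have h3 := length_le_pre t a hsa
    simp only
    omega
  · -- height
    refine ⟨1 - (n : ℤ), fun a ha => ?_⟩
    obtain ⟨sa, hsa⟩ := haddr a ha
    have h1 := pre_add_size_le t a hsa
    have h2 := size_pos sa
    simp only
    omega
  · -- root top-left
    intro a ha
    obtain ⟨sa, hsa⟩ := haddr a ha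
    have h3 := length_le_pre t a hsa
    simp only [hpre_nil t, List.length_nil]
    omega
  · -- vertical path
    refine ⟨lpath t, lpath_leaf t, ?_, ?_⟩
    · intro a h
      have := lpath_prefix_pre t a h
      simp only [hpre_nil t, List.length_nil]
      omega
    · intro a ha hnp
      obtain ⟨sa, hsa⟩ := haddr a ha
      simp only [hpre_nil t, List.length_nil]
      intro h
      exact hnp (lpath_of_pre_eq t a hsa (by omega))
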